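/- As formal power series, exp(∑_{n≥1} ((k+ℓ)^n + (k−ℓ)^n − 1 + (−1)^n) zⁿ/n) = (1−z)/((1+z)(1−(k+ℓ)z)(1−(k−ℓ)z)); equivalently, the gTM dynamical zeta function ζ^TM_{k,ℓ}(z) = (1−z)/((1+z)(1−(k+ℓ)z)(1−(k−ℓ)z)) has fixed point counts a^TM(n) = (k+ℓ)^n + (k−ℓ)^n − (1 − (−1)^n). -/

import Mathlib

/-- the generalised Thue-Morse zeta function identity:
`exp(∑_{n≥1} a^TM(n) zⁿ/n) = (1-z)/((1+z)(1-(k+ℓ)z)(1-(k-ℓ)z))`, with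
fixed point counts `a^TM(n) = (k+ℓ)ⁿ + (k-ℓ)ⁿ - (1 - (-1)ⁿ)`, valid for
`|z| (k+ℓ) < 1`. -/
theorem gtm_zeta_function (k ℓ : ℕ) (hk : 1 ≤ k) (hℓ : 1 ≤ ℓ) :
    ∀ z : ℝ, |z| * ((k : ℝ) + ℓ) < 1 →
      Real.exp (∑' n : ℕ,
        (((k : ℝ) + ℓ) ^ (n + 1) + ((k : ℝ) - ℓ) ^ (n + 1)
          - (1 - (-1 : ℝ) ^ (n + 1))) * z ^ (n + 1) / (n + 1)) =
      (1 - z) / ((1 + z) * (1 - ((k : ℝ) + ℓ) * z) * (1 - ((k : ℝ) - ℓ) * z)) := by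
  intro z hz
  set A : ℝ := (k : ℝ) + ℓ with hA
  set B : ℝ := (k : ℝ) - ℓ with hB
  have hk1 : (1 : ℝ) ≤ (k : ℝ) := by exact_mod_cast hk
  have hl1 : (1 : ℝ) ≤ (ℓ : ℝ) := by exact_mod_cast hℓ
  have hA2 : (2 : ℝ) ≤ A := by rw [hA]; linarith
  have hBA : |B| ≤ A := by
    rw [hB, hA, abs_le]; constructor <;> linarith
  have hzA : |A * z| < 1 := by
    rw [abs_mul, abs_of_pos (by linarith : (0:ℝ) < A), mul_comm]; exact hz
  have hzB : |B * z| < 1 := by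
    rw [abs_mul]
    calc |B| * |z| ≤ A * |z| := by
          exact mul_le_mul_of_nonneg_right hBA (abs_nonneg z)
      _ < 1 := by rw [mul_comm]; exact hz
  have hz1 : |z| < 1 := by
    calc |z| = |z| * 1 := by ring
      _ ≤ |z| * A := by nlinarith [abs_nonneg z]
      _ < 1 := hz
  have hzn : |(-z)| < 1 := by rwa [abs_neg]
  have h1 := Real.hasSum_pow_div_log_of_abs_lt_one hzA
  have h2 := Real.hasSum_pow_div_log_of_abs_lt_one hzB
  have h3 := Real.hasSum_pow_div_log_of_abs_lt_one hz1
  have h4 := Real.hasSum_pow_div_log_of_abs_lt_one hzn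
  have key := ((h1.add h2).sub h3).add h4
  have hfun : ∀ n : ℕ,
      (A ^ (n + 1) + B ^ (n + 1) - (1 - (-1 : ℝ) ^ (n + 1))) * z ^ (n + 1) / (n + 1)
      = ((A * z) ^ (n + 1) / (n + 1) + (B * z) ^ (n + 1) / (n + 1)
          - z ^ (n + 1) / (n + 1)) + (-z) ^ (n + 1) / (n + 1) := by
    intro n
    rw [mul_pow, mul_pow, neg_pow]
    ring
  rw [tsum_congr hfun, key.tsum_eq]
  have p1 : (0:ℝ) < 1 - A * z := by
    have := (abs_lt.mp hzA).2; linarith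
  have p2 : (0:ℝ) < 1 - B * z := by
    have := (abs_lt.mp hzB).2; linarith
  have p3 : (0:ℝ) < 1 - z := by
    have := (abs_lt.mp hz1).2; linarith
  have p4 : (0:ℝ) < 1 - (-z) := by
    have := (abs_lt.mp hz1).1; linarith
  rw [Real.exp_add, Real.exp_sub, Real.exp_add, Real.exp_neg, Real.exp_neg,
    Real.exp_neg, Real.exp_neg, Real.exp_log p1, Real.exp_log p2,
    Real.exp_log p3, Real.exp_log p4]
  have q4 : (1:ℝ) + z ≠ 0 := (by linarith : (0:ℝ) < 1 + z).ne'
  field_simp [p1.ne', p2.ne', p3.ne', q4]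
  ring
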